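/- Let n ≥ 1 be an integer, let a ≥ 1/(2(2n+1)), let x_* ∈ ℝ and b ∈ ℝ with 0 < b − x_* ≤ 1. Let h : ℝ → ℝ be continuous on [x_*, b] with |h(x)| ≤ 1/4 for all x ∈ [x_*, b], and let g : ℝ → ℝ be differentiable on [x_*, b] with g'(x) = (2n+1)·a·(x − x_*)^{2n} + h(x)·(x − x_*)^{2n+1} for all x ∈ [x_*, b]. Then for all x₁, x₂ with x_* ≤ x₁ ≤ x₂ ≤ b, one has g(x₂) − g(x₁) ≥ (x₂ − x₁)^{2n+1} / (4(2n+1)). -/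

import Mathlib

theorem statement10 (n : ℕ) (hn : 1 ≤ n) (a xstar b : ℝ)
    (ha : 1 / (2 * (2 * (n : ℝ) + 1)) ≤ a)
    (hb0 : 0 < b - xstar) (hb1 : b - xstar ≤ 1)
    (h g : ℝ → ℝ)
    (hhcont : ContinuousOn h (Set.Icc xstar b))
    (hhb : ∀ x ∈ Set.Icc xstar b, |h x| ≤ 1 / 4)
    (hg : ∀ x ∈ Set.Icc xstar b,
      HasDerivWithinAt g
        ((2 * (n : ℝ) + 1) * a * (x - xstar) ^ (2 * n) + h x * (x - xstar) ^ (2 * n + 1))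
        (Set.Icc xstar b) x) :
    ∀ x₁ ∈ Set.Icc xstar b, ∀ x₂ ∈ Set.Icc xstar b, x₁ ≤ x₂ →
      (x₂ - x₁) ^ (2 * n + 1) / (4 * (2 * (n : ℝ) + 1)) ≤ g x₂ - g x₁ := by
  have hN : (0 : ℝ) < 2 * (n : ℝ) + 1 := by positivity
  set c : ℝ := 1 / (4 * (2 * (n : ℝ) + 1)) with hc
  have hc0 : 0 < c := by positivity
  set φ : ℝ → ℝ := fun x => g x - c * (x - xstar) ^ (2 * n + 1) with hφ
  have hmono : MonotoneOn φ (Set.Icc xstar b) := by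
    apply monotoneOn_of_hasDerivWithinAt_nonneg (convex_Icc xstar b)
      (f' := fun x => (2 * (n : ℝ) + 1) * a * (x - xstar) ^ (2 * n)
        + h x * (x - xstar) ^ (2 * n + 1)
        - c * ((2 * n + 1 : ℕ) * (x - xstar) ^ (2 * n) * 1))
    · intro x hx
      exact ((hg x hx).sub (((((hasDerivWithinAt_id x _).sub_const xstar).pow
        (2 * n + 1))).const_mul c)).continuousWithinAt
    · rw [interior_Icc]
      intro x hx
      have hx' : x ∈ Set.Icc xstar b := Set.mem_Icc.2 ⟨le_of_lt hx.1, le_of_lt hx.2⟩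
      have := ((hg x hx').sub ((((hasDerivWithinAt_id x (Set.Icc xstar b)).sub_const
        xstar).pow (2 * n + 1)).const_mul c)).mono Set.Ioo_subset_Icc_self
      simp at this ⊢
      exact this
    · intro x hx
      rw [interior_Icc] at hx
      have hx' : x ∈ Set.Icc xstar b := Set.mem_Icc.2 ⟨le_of_lt hx.1, le_of_lt hx.2⟩
      set t : ℝ := x - xstar with ht
      have ht0 : 0 ≤ t := by simp [ht]; linarith [hx.1]
      have ht1 : t ≤ 1 := by simp [ht]; linarith [hx.2, hb1]
      have hpow : t ^ (2 * n + 1) ≤ t ^ (2 * n) :=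
        pow_le_pow_of_le_one ht0 ht1 (by omega)
      have hpow0 : 0 ≤ t ^ (2 * n) := by positivity
      have hha : -(1/4) ≤ h x := neg_le_of_abs_le (hhb x hx')
      have hca : 1 / (2 * (2 * (n : ℝ) + 1)) * (2 * (n : ℝ) + 1) ≤ a * (2 * (n : ℝ) + 1) :=
        mul_le_mul_of_nonneg_right ha (le_of_lt hN)
      have haN : (1 : ℝ) / 2 ≤ (2 * (n : ℝ) + 1) * a := by
        rw [mul_comm]
        calc (1:ℝ)/2 = 1 / (2 * (2 * (n : ℝ) + 1)) * (2 * (n : ℝ) + 1) := by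
              field_simp
          _ ≤ a * (2 * (n : ℝ) + 1) := hca
      have key : 0 ≤ (2 * (n : ℝ) + 1) * a * t ^ (2 * n)
          + h x * t ^ (2 * n + 1) - c * ((2 * n + 1 : ℕ) * t ^ (2 * n) * 1) := by
        have h1 : h x * t ^ (2 * n + 1) ≥ -(1/4) * t ^ (2 * n) := by
          calc h x * t ^ (2 * n + 1) ≥ -(1/4) * t ^ (2 * n + 1) :=
                mul_le_mul_of_nonneg_right hha (by positivity)
            _ ≥ -(1/4) * t ^ (2 * n) := by nlinarith [hpow]
        have h2 : c * ((2 * n + 1 : ℕ) * t ^ (2 * n) * 1) = (1/4) * t ^ (2 * n) := by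
          push_cast
          rw [hc]
          field_simp
        rw [h2]
        nlinarith [mul_le_mul_of_nonneg_right haN hpow0]
      exact key
  intro x₁ hx₁ x₂ hx₂ hle
  have hmle := hmono hx₁ hx₂ hle
  have hsplit : (x₂ - x₁) ^ (2 * n + 1) + (x₁ - xstar) ^ (2 * n + 1)
      ≤ (x₂ - xstar) ^ (2 * n + 1) := by
    have := pow_add_pow_le (sub_nonneg.2 hle) (sub_nonneg.2 hx₁.1)
      (n := 2 * n + 1) (by omega)
    have heq : (x₂ - x₁) + (x₁ - xstar) = x₂ - xstar := by ring
    rwa [heq] at this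
  have hφle : c * (x₂ - xstar) ^ (2 * n + 1) - c * (x₁ - xstar) ^ (2 * n + 1)
      ≤ g x₂ - g x₁ := by
    simp only [hφ] at hmle; linarith
  have : (x₂ - x₁) ^ (2 * n + 1) / (4 * (2 * (n : ℝ) + 1))
      = c * (x₂ - x₁) ^ (2 * n + 1) := by rw [hc]; ring
  rw [this]
  nlinarith [mul_le_mul_of_nonneg_left hsplit (le_of_lt hc0)]
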